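/- Let Σ be a finite alphabet and w, w̃ ∈ Σ* with w ∼_k w̃ and ι(w) = ι(w̃) < k. Then for all 0 ≤ i ≤ j ≤ ι(w), the factors satisfy α_i β_{i+1} α_{i+1} ⋯ β_j α_j ∼_{k − ι(w) + j − i} α̃_i β̃_{i+1} α̃_{i+1} ⋯ β̃_j α̃_j, where α_l, β_l (resp. α̃_l, β̃_l) are the factors of the α-β-factorization of w (resp. w̃). -/

import Mathlib

open List

variable {α : Type*} [DecidableEq α] [Fintype α]

/-- Simon `k`-congruence: `u` and `v` have the same scattered factors
(subsequences) of length at most `k`. -/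
def SimonCongr (k : ℕ) (u v : List α) : Prop :=
  ∀ s : List α, s.length ≤ k → (s.Sublist u ↔ s.Sublist v)

/-- `w` is `k`-universal with respect to the alphabet `S`: every word of length `k`
over `S` is a scattered factor of `w`. -/
def UniversalOn (S : Finset α) (k : ℕ) (w : List α) : Prop :=
  ∀ s : List α, s.length = k → (∀ x ∈ s, x ∈ S) → s.Sublist w

/-- The universality index of `w` w.r.t. the alphabet `S`. -/
noncomputable def iotaOn (S : Finset α) (w : List α) : ℕ :=
  sSup {k | UniversalOn S k w}

/-- The universality index of `w` w.r.t. the full alphabet. -/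
noncomputable def iotaUniv (w : List α) : ℕ := iotaOn Finset.univ w

/-- `a` is an arch w.r.t. `S`: it contains every letter of `S`, and its last letter
belongs to `S` and occurs exactly once in `a`. -/
def IsArchOn (S : Finset α) (a : List α) : Prop :=
  (∀ x ∈ S, x ∈ a) ∧ ∃ a' x, a = a' ++ [x] ∧ x ∈ S ∧ x ∉ a'

/-- `(ars, r)` is the arch factorization of `w` w.r.t. `S`. -/
def IsArchFactOn (S : Finset α) (w : List α) (ars : List (List α)) (r : List α) : Prop :=
  w = ars.flatten ++ r ∧ (∀ a ∈ ars, IsArchOn S a) ∧ ¬ (∀ x ∈ S, x ∈ r)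

/-- `(A, B)` is the α-β-factorization of `w` with `m` arches:
`αᵢ₋₁βᵢ` (for `i ∈ [m]`) together with rest `α_m` is the arch factorization of `w`, and
`(β_{m-i}α_{m-i})^R` together with rest `α₀^R` is the arch factorization of `w^R`. -/
def IsAlphaBetaFact (w : List α) (m : ℕ) (A B : ℕ → List α) : Prop :=
  IsArchFactOn Finset.univ w (List.ofFn fun i : Fin m => A i.val ++ B (i.val + 1)) (A m) ∧
  IsArchFactOn Finset.univ w.reverse
    (List.ofFn fun i : Fin m => (B (m - i.val) ++ A (m - i.val)).reverse) ((A 0).reverse)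

/-- The concatenation `αᵢ βᵢ₊₁ αᵢ₊₁ ⋯ βⱼ αⱼ`. -/
def abSeg (A B : ℕ → List α) (i j : ℕ) : List α :=
  A i ++ (((List.Ico (i + 1) (j + 1)).map fun l => B l ++ A l).flatten)

/-- The core of a `β`-factor: the factor with its first and last letter removed. -/
def coreOf (b : List α) : List α := (b.drop 1).dropLast


section AuxCutting

private def seg (F : ℕ → List α) (i n : ℕ) : List α :=
  (List.ofFn fun l : Fin n => F (i + l.val)).flatten

private lemma ofFn_ext {n : ℕ} {f g : Fin n → List α} (h : ∀ l : Fin n, f l = g l) :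
    List.ofFn f = List.ofFn g := congrArg _ (funext h)

private lemma seg_zero (F : ℕ → List α) (i : ℕ) : seg F i 0 = [] := by simp [seg]

private lemma seg_one (F : ℕ → List α) (i : ℕ) : seg F i 1 = F i := by simp [seg]

private lemma seg_succ (F : ℕ → List α) (i n : ℕ) :
    seg F i (n + 1) = F i ++ seg F (i + 1) n := by
  unfold seg
  rw [List.ofFn_succ]
  rw [List.flatten_cons]
  congr 1
  apply congrArg
  apply ofFn_ext
  intro l
  congr 1
  simp only [Fin.val_succ]
  omega

private lemma seg_add (F : ℕ → List α) :
    ∀ (a : ℕ) (i b : ℕ), seg F i (a + b) = seg F i a ++ seg F (i + a) b := by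
  intro a
  induction a with
  | zero => intro i b; simp [seg_zero]
  | succ a ih =>
      intro i b
      have h1 : a + 1 + b = (a + b) + 1 := by omega
      rw [h1, seg_succ, seg_succ, ih (i + 1) b, List.append_assoc]
      congr 3
      omega

private lemma seg_top (F : ℕ → List α) (i n : ℕ) :
    seg F i (n + 1) = seg F i n ++ F (i + n) := by
  rw [seg_add F n i 1, seg_one]

private lemma seg_index_shift (F : ℕ → List α) (i n : ℕ) :
    seg F (i + 1) n = seg (fun l => F (l + 1)) i n := by
  unfold seg
  apply congrArg
  apply ofFn_ext
  intro l
  congr 1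
  omega

private lemma seg_shift (A B : ℕ → List α) :
    ∀ (n i : ℕ), seg (fun l => A l ++ B (l + 1)) i n ++ A (i + n) =
      A i ++ seg (fun l => B (l + 1) ++ A (l + 1)) i n := by
  intro n
  induction n with
  | zero => intro i; simp [seg_zero]
  | succ n ih =>
      intro i
      rw [seg_succ, seg_succ]
      have h1 : i + (n + 1) = (i + 1) + n := by omega
      rw [h1]
      have h2 := ih (i + 1)
      simp only [List.append_assoc] at h2 ⊢
      rw [h2]

private def rlist (F : ℕ → List α) (i n : ℕ) : List (List α) :=
  List.ofFn fun l : Fin n => (F (i + n - 1 - l.val)).reverse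

private lemma rev_seg (F : ℕ → List α) :
    ∀ (n i : ℕ), (seg F i n).reverse = (rlist F i n).flatten := by
  intro n
  induction n with
  | zero => intro i; simp [seg_zero, rlist]
  | succ n ih =>
      intro i
      rw [seg_succ, List.reverse_append, ih (i + 1)]
      unfold rlist
      rw [List.ofFn_succ']
      rw [List.concat_eq_append, List.flatten_append]
      congr 1
      · apply congrArg
        apply ofFn_ext
        intro l
        have hl : (l : ℕ) < n := l.isLt
        congr 2
        simp only [Fin.coe_castSucc]
        omega
      · simp

private lemma ico_seg (f : ℕ → List α) :
    ∀ (d i : ℕ), ((List.Ico i (i + d)).map f).flatten = seg f i d := by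
  intro d
  induction d with
  | zero => intro i; simp [List.Ico.self_empty, seg_zero]
  | succ d ih =>
      intro i
      have h1 : i + (d + 1) = (i + d) + 1 := by omega
      have h2 : i ≤ i + d := by omega
      rw [h1, List.Ico.succ_top h2, List.map_append, List.flatten_append, ih i, seg_top]
      simp

private lemma abSeg_eq (A B : ℕ → List α) (i j : ℕ) (hij : i ≤ j) :
    abSeg A B i j = A i ++ seg (fun l => B (l + 1) ++ A (l + 1)) i (j - i) := by
  unfold abSeg
  congr 1
  have h1 : j + 1 = (i + 1) + (j - i) := by omega
  rw [h1, ico_seg (fun l => B l ++ A l) (j - i) (i + 1), seg_index_shift]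

private lemma fact_split {w : List α} {m : ℕ} {A B : ℕ → List α}
    (hw : IsAlphaBetaFact w m A B) {i j : ℕ} (hij : i ≤ j) (hjm : j ≤ m) :
    w = seg (fun l => A l ++ B (l + 1)) 0 i ++
      (abSeg A B i j ++ seg (fun l => B (l + 1) ++ A (l + 1)) j (m - j)) := by
  set G := fun l => A l ++ B (l + 1) with hG
  set H := fun l => B (l + 1) ++ A (l + 1) with hH
  have h0 : w = seg G 0 m ++ A m := by
    rw [hw.1.1]
    congr 1
    unfold seg
    apply congrArg
    apply ofFn_ext
    intro l
    simp [hG]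
  have h1 : m = i + (m - i) := by omega
  have h2 : seg G 0 m = seg G 0 i ++ seg G i (m - i) := by
    conv_lhs => rw [h1, seg_add]
    rw [Nat.zero_add]
  have h3 : seg G i (m - i) ++ A (i + (m - i)) = A i ++ seg H i (m - i) := seg_shift A B _ _
  have h4 : seg H i (m - i) = seg H i (j - i) ++ seg H j (m - j) := by
    have hmi : m - i = (j - i) + (m - j) := by omega
    have hji : i + (j - i) = j := by omega
    rw [hmi, seg_add, hji]
  rw [abSeg_eq A B i j hij]
  rw [h0, h2, List.append_assoc]
  congr 1
  rw [← h1] at h3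
  rw [h3, h4]
  simp [List.append_assoc]
  rfl

private lemma peel_one {x : α} {p t v : List α} (hx : x ∉ p)
    (h : (x :: t).Sublist (p ++ [x] ++ v)) : t.Sublist v := by
  rw [List.append_assoc] at h
  obtain ⟨l₁, l₂, heq, h₁, h₂⟩ := List.sublist_append_iff.mp h
  cases l₁ with
  | nil =>
      simp only [List.nil_append] at heq
      rw [← heq] at h₂
      exact (List.cons_sublist_cons.mp h₂)
  | cons a l₁ =>
      exfalso
      have : a = x := by
        have := congrArg (fun l => l.head?) heq
        simpa using this.symm
      subst this
      exact hx (h₁.subset (List.mem_cons_self))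

private lemma absorb_one {x : α} {a t v : List α} (hx : x ∈ a) (h : t.Sublist v) :
    (x :: t).Sublist (a ++ v) := by
  obtain ⟨p, q, rfl⟩ := List.append_of_mem hx
  have h1 : (x :: t).Sublist (x :: (q ++ v)) :=
    List.cons_sublist_cons.mpr (h.trans (List.sublist_append_right q v))
  have h2 : (x :: (q ++ v)).Sublist (p ++ (x :: (q ++ v))) := List.sublist_append_right _ _
  have h3 : p ++ (x :: (q ++ v)) = (p ++ x :: q) ++ v := by simp
  rw [h3] at h2
  exact h1.trans h2

private def Pee (a : List α) (c : α) : Prop := ∃ p, a = p ++ [c] ∧ c ∉ p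

private lemma mk_peel :
    ∀ as : List (List α), (∀ a ∈ as, ∃ p x, a = p ++ [x] ∧ x ∉ p) →
      ∃ cs : List α, List.Forall₂ Pee as cs := by
  intro as
  induction as with
  | nil => exact fun _ => ⟨[], List.Forall₂.nil⟩
  | cons a as ih =>
      intro h
      obtain ⟨p, x, hp, hn⟩ := h a (List.mem_cons_self)
      obtain ⟨cs, hcs⟩ := ih (fun b hb => h b (List.mem_cons_of_mem _ hb))
      exact ⟨x :: cs, List.Forall₂.cons ⟨p, hp, hn⟩ hcs⟩

private lemma peel_many :
    ∀ {as : List (List α)} {cs : List α}, List.Forall₂ Pee as cs →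
      ∀ t v : List α, (cs ++ t).Sublist (as.flatten ++ v) → t.Sublist v := by
  intro as cs h
  induction h with
  | nil => intro t v h; simpa using h
  | @cons a x as cs hax _ ih =>
      intro t v h
      obtain ⟨p, rfl, hn⟩ := hax
      apply ih
      apply peel_one hn
      simpa [List.append_assoc] using h

private lemma absorb_many :
    ∀ (as : List (List α)) (cs : List α), cs.length = as.length →
      (∀ a ∈ as, ∀ x : α, x ∈ a) → ∀ {t v : List α}, t.Sublist v →
      (cs ++ t).Sublist (as.flatten ++ v) := by
  intro as
  induction as with
  | nil =>
      intro cs hl _ t v h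
      rw [List.length_nil, List.length_eq_zero_iff] at hl
      subst hl
      simpa using h
  | cons a as ih =>
      intro cs hl hmem t v h
      cases cs with
      | nil => simp at hl
      | cons c cs =>
          simp only [List.length_cons, Nat.add_right_cancel_iff] at hl
          have h1 := ih cs hl (fun b hb => hmem b (List.mem_cons_of_mem _ hb)) h
          have h2 := absorb_one (hmem a (List.mem_cons_self) c) h1
          simpa [List.append_assoc] using h2

private lemma arch_of_fact {w : List α} {m : ℕ} {A B : ℕ → List α}
    (hw : IsAlphaBetaFact w m A B) {l : ℕ} (hl : l < m) :
    IsArchOn Finset.univ (A l ++ B (l + 1)) := by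
  apply hw.1.2.1
  rw [List.mem_ofFn]
  exact ⟨⟨l, hl⟩, rfl⟩

private lemma rarch_of_fact {w : List α} {m : ℕ} {A B : ℕ → List α}
    (hw : IsAlphaBetaFact w m A B) {t : ℕ} (h1 : 1 ≤ t) (h2 : t ≤ m) :
    IsArchOn Finset.univ ((B t ++ A t).reverse) := by
  apply hw.2.2.1
  rw [List.mem_ofFn]
  refine ⟨⟨m - t, by omega⟩, ?_⟩
  have : m - (m - t) = t := by omega
  simp only [this]

private lemma transfer (k m i j : ℕ) (w w' : List α) (A B A' B' : ℕ → List α)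
    (hw : IsAlphaBetaFact w m A B) (hw' : IsAlphaBetaFact w' m A' B')
    (hmk : m ≤ k) (hij : i ≤ j) (hjm : j ≤ m)
    (h : ∀ s : List α, s.length ≤ k → s.Sublist w → s.Sublist w')
    (s : List α) (hs : s.Sublist (abSeg A B i j)) (hlen : s.length ≤ k - m + j - i) :
    s.Sublist (abSeg A' B' i j) := by
  set G := fun l => A l ++ B (l + 1) with hGdef
  set H := fun l => B (l + 1) ++ A (l + 1) with hHdef
  set G' := fun l => A' l ++ B' (l + 1) with hG'def
  set H' := fun l => B' (l + 1) ++ A' (l + 1) with hH'def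
  set M := abSeg A B i j with hMdef
  set M' := abSeg A' B' i j with hM'def
  -- the four relevant lists of factors
  set asW : List (List α) := List.ofFn fun l : Fin i => G (0 + l.val) with hasW
  set asW' : List (List α) := List.ofFn fun l : Fin i => G' (0 + l.val) with hasW'
  set rasW : List (List α) := rlist H j (m - j) with hrasW
  set rasW' : List (List α) := rlist H' j (m - j) with hrasW'
  have hsplit : w = asW.flatten ++ (M ++ seg H j (m - j)) := fact_split hw hij hjm
  have hsplit' : w' = asW'.flatten ++ (M' ++ seg H' j (m - j)) := fact_split hw' hij hjm
  -- peel data, from w'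
  have hpeel_as' : ∀ a ∈ asW', ∃ p x, a = p ++ [x] ∧ x ∉ p := by
    intro a ha
    rw [hasW', List.mem_ofFn] at ha
    obtain ⟨l, rfl⟩ := ha
    have hl : 0 + (l : ℕ) < m := by have := l.isLt; omega
    obtain ⟨p, x, hpx, _, hn⟩ := (arch_of_fact hw' hl).2
    exact ⟨p, x, hpx, hn⟩
  have hpeel_ras' : ∀ a ∈ rasW', ∃ p x, a = p ++ [x] ∧ x ∉ p := by
    intro a ha
    rw [hrasW', rlist, List.mem_ofFn] at ha
    obtain ⟨l, rfl⟩ := ha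
    have hl := l.isLt
    have ht1 : 1 ≤ m - l.val := by omega
    have ht2 : m - l.val ≤ m := by omega
    obtain ⟨p, x, hpx, _, hn⟩ := (rarch_of_fact hw' ht1 ht2).2
    refine ⟨p, x, ?_, hn⟩
    have hidx : j + (m - j) - 1 - (l : ℕ) + 1 = m - (l : ℕ) := by omega
    rw [hH'def]
    simp only [hidx]
    exact hpx
  -- full-alphabet data, for w
  have hfull_as : ∀ a ∈ asW, ∀ x : α, x ∈ a := by
    intro a ha x
    rw [hasW, List.mem_ofFn] at ha
    obtain ⟨l, rfl⟩ := ha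
    have hl : 0 + (l : ℕ) < m := by have := l.isLt; omega
    exact (arch_of_fact hw hl).1 x (Finset.mem_univ x)
  have hfull_ras : ∀ a ∈ rasW, ∀ x : α, x ∈ a := by
    intro a ha x
    rw [hrasW, rlist, List.mem_ofFn] at ha
    obtain ⟨l, rfl⟩ := ha
    have hl := l.isLt
    have ht1 : 1 ≤ m - l.val := by omega
    have ht2 : m - l.val ≤ m := by omega
    have hidx : j + (m - j) - 1 - (l : ℕ) + 1 = m - (l : ℕ) := by omega
    have := (rarch_of_fact hw ht1 ht2).1 x (Finset.mem_univ x)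
    rw [hHdef]
    simp only [hidx]
    exact this
  obtain ⟨cs, hcs⟩ := mk_peel asW' hpeel_as'
  obtain ⟨ds, hds⟩ := mk_peel rasW' hpeel_ras'
  have hcs_len : cs.length = i := by
    have := hcs.length_eq
    simp [hasW'] at this
    omega
  have hds_len : ds.length = m - j := by
    have := hds.length_eq
    simp [hrasW', rlist] at this
    omega
  -- step 1 : s ++ ds.reverse <+ M ++ seg H j (m-j)
  have step1 : (s ++ ds.reverse).Sublist (M ++ seg H j (m - j)) := by
    rw [← List.reverse_sublist]
    rw [List.reverse_append, List.reverse_append, List.reverse_reverse]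
    rw [rev_seg]
    refine absorb_many rasW ds ?_ hfull_ras ?_
    · rw [hds_len, hrasW, rlist]
      simp
    · rw [List.reverse_sublist]
      exact hs
  -- step 2 : absorb into w
  have step2 : (cs ++ (s ++ ds.reverse)).Sublist w := by
    rw [hsplit]
    refine absorb_many asW cs ?_ hfull_as step1
    rw [hcs_len, hasW]
    simp
  -- step 3 : length bound
  have step3 : (cs ++ (s ++ ds.reverse)).length ≤ k := by
    simp only [List.length_append, List.length_reverse, hcs_len, hds_len]
    omega
  -- step 4 : transfer to w'
  have step4 := h _ step3 step2
  -- step 5 : peel left in w'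
  have step5 : (s ++ ds.reverse).Sublist (M' ++ seg H' j (m - j)) := by
    rw [hsplit'] at step4
    exact peel_many hcs _ _ step4
  -- step 6 : peel right in w'
  have step6 : s.Sublist M' := by
    rw [← List.reverse_sublist] at step5 ⊢
    rw [List.reverse_append, List.reverse_append, List.reverse_reverse, rev_seg] at step5
    exact peel_many hds _ _ step5
  exact step6

end AuxCutting

/-- cutting arches from `k`-congruent words. -/
theorem simonCongr_abSeg (k m : ℕ) (w w' : List α) (A B A' B' : ℕ → List α)
    (hw : IsAlphaBetaFact w m A B) (hw' : IsAlphaBetaFact w' m A' B')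
    (hiw : iotaUniv w = m) (hiw' : iotaUniv w' = m) (hmk : m < k)
    (h : SimonCongr k w w') :
    ∀ i j : ℕ, i ≤ j → j ≤ m →
      SimonCongr (k - m + j - i) (abSeg A B i j) (abSeg A' B' i j) := by
  intro i j hij hjm s hslen
  have hmk' : m ≤ k := hmk.le
  constructor
  · exact fun hs => transfer k m i j w w' A B A' B' hw hw' hmk' hij hjm
      (fun t ht => (h t ht).mp) s hs hslen
  · exact fun hs => transfer k m i j w' w A' B' A B hw' hw hmk' hij hjm
      (fun t ht => (h t ht).mpr) s hs hslen
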